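/- Let R be a Dedekind domain with fraction field K, let f_1, …, f_n be formal power series in K[[x_1,…,x_d]], and let S be an infinite set of maximal ideals 𝔭 of R such that all coefficients of every f_i lie in the localization R_𝔭. If for every 𝔭 ∈ S the reductions of f_1, …, f_n modulo 𝔭 (obtained by reducing every coefficient modulo 𝔭R_𝔭) are linearly dependent over the residue field R/𝔭, then f_1, …, f_n are linearly dependent over K. -/

import Mathlib

/-- `x ∈ K` lies in the localization `R_𝔭 ⊆ K`. -/
def InLoc (R K : Type*) [CommRing R] [CommRing K] [Algebra R K] (𝔭 : Ideal R) (x : K) : Prop :=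
  ∃ a b : R, b ∉ 𝔭 ∧ algebraMap R K b * x = algebraMap R K a

/-- `x ∈ K` lies in `𝔭 R_𝔭 ⊆ K` (i.e. `x` reduces to `0` modulo `𝔭`). -/
def InMaxLoc (R K : Type*) [CommRing R] [CommRing K] [Algebra R K] (𝔭 : Ideal R) (x : K) :
    Prop :=
  ∃ a b : R, a ∈ 𝔭 ∧ b ∉ 𝔭 ∧ algebraMap R K b * x = algebraMap R K a


open Submodule in
lemma exists_det_ne_zero {K : Type} [Field K] {I : Type} {n : ℕ} (g : Fin n → I → K)
    (H : ∀ c : Fin n → K, (∀ m, ∑ i, c i * g i m = 0) → c = 0) :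
    ∃ m : Fin n → I, (Matrix.of fun i j => g i (m j)).det ≠ 0 := by
  classical
  set r : I → (Fin n → K) := fun m i => g i m with hr
  have hspan : Submodule.span K (Set.range r) = ⊤ := by
    by_contra h
    obtain ⟨φ, hφ, hmap⟩ := Submodule.exists_dual_map_eq_bot_of_lt_top
      (lt_top_iff_ne_top.2 h) inferInstance
    set c : Fin n → K := fun i => φ (Pi.single i 1) with hcdef
    have hc : ∀ m, ∑ i, c i * g i m = 0 := by
      intro m
      have h0 : φ (r m) = 0 := by
        have : φ (r m) ∈ Submodule.map φ (Submodule.span K (Set.range r)) :=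
          Submodule.mem_map_of_mem (Submodule.subset_span (Set.mem_range_self m))
        rw [hmap] at this; exact (Submodule.mem_bot K).mp this
      rw [LinearMap.pi_apply_eq_sum_univ φ (r m)] at h0
      rw [← h0]
      refine Finset.sum_congr rfl fun i _ => ?_
      have hsingle : (fun j => if i = j then (1:K) else 0) = Pi.single i 1 := by
        funext j; simp [Pi.single_apply, eq_comm]
      rw [hsingle]
      simp [hr, hcdef, mul_comm, smul_eq_mul]
    have hc0 := H c hc
    apply hφ
    refine LinearMap.ext fun x => ?_
    rw [LinearMap.pi_apply_eq_sum_univ φ x]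
    simp only [LinearMap.zero_apply]
    refine Finset.sum_eq_zero fun i _ => ?_
    have hsingle : (fun j => if i = j then (1:K) else 0) = Pi.single i 1 := by
      funext j; simp [Pi.single_apply, eq_comm]
    have : c i = 0 := congrFun hc0 i
    rw [hcdef] at this
    simp only at this
    rw [hsingle, this, smul_zero]
  obtain ⟨t, hts, htspan, htind⟩ := exists_linearIndependent K (Set.range r)
  rw [hspan] at htspan
  let b : Module.Basis t K (Fin n → K) := Module.Basis.mk htind (by rw [Subtype.range_coe, htspan])
  have : Fintype t := FiniteDimensional.fintypeBasisIndex b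
  have hcard : Fintype.card t = n := by
    rw [← Module.finrank_eq_card_basis b, Module.finrank_fin_fun]
  let e : Fin n ≃ t := (Fintype.equivFinOfCardEq hcard).symm
  choose ms hms using fun j : Fin n => (hts (e j).2 : (e j : Fin n → K) ∈ Set.range r)
  refine ⟨ms, ?_⟩
  have hind : LinearIndependent K (fun j : Fin n => ((e j : t) : Fin n → K)) :=
    htind.comp e e.injective
  have hB : IsUnit (Matrix.of fun j i => g i (ms j)) := by
    rw [← Matrix.linearIndependent_rows_iff_isUnit]
    have hBe : (Matrix.of fun j i => g i (ms j)) = fun j : Fin n => ((e j : t) : Fin n → K) :=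
      funext fun j => hms j
    rw [show (Matrix.of fun j i => g i (ms j)).row = (Matrix.of fun j i => g i (ms j)) from rfl, hBe]
    exact hind
  have hBdet : ((Matrix.of fun j i => g i (ms j)) : Matrix (Fin n) (Fin n) K).det ≠ 0 :=
    ((Matrix.isUnit_iff_isUnit_det _).mp hB).ne_zero
  intro h
  apply hBdet
  rw [← Matrix.det_transpose]
  exact h

lemma mem_of_matrix_dependence {R K : Type} [CommRing R] [IsDomain R] [Field K] [Algebra R K]
    [IsFractionRing R K] (𝔭 : Ideal R) (hmax : 𝔭.IsMaximal) {n : ℕ}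
    (M : Matrix (Fin n) (Fin n) K)
    (hM : ∀ i j, InLoc R K 𝔭 (M i j))
    (hdet : ∃ a b : R, a ∉ 𝔭 ∧ b ∉ 𝔭 ∧ M.det * algebraMap R K b = algebraMap R K a)
    (c : Fin n → R)
    (hc : ∀ j, InMaxLoc R K 𝔭 (∑ i, algebraMap R K (c i) * M i j)) :
    ∀ k, c k ∈ 𝔭 := by
  classical
  haveI := hmax.isPrime
  set A := Localization.AtPrime 𝔭 with hA
  have hKinj : Function.Injective (algebraMap R K) := IsFractionRing.injective R K
  have hunits : ∀ y : 𝔭.primeCompl, IsUnit (algebraMap R K y) := by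
    intro y
    have hy0 : (y : R) ≠ 0 := fun h => y.2 (h ▸ 𝔭.zero_mem)
    exact IsUnit.mk0 _ (fun h => hy0 (hKinj (by rw [h, map_zero])))
  set ψ : A →+* K := IsLocalization.lift hunits with hψ
  have hψR : ∀ x : R, ψ (algebraMap R A x) = algebraMap R K x := fun x =>
    IsLocalization.lift_eq hunits x
  have hψinj : Function.Injective ψ := by
    rw [injective_iff_map_eq_zero]
    intro y hy
    obtain ⟨⟨r, s⟩, rfl⟩ := IsLocalization.mk'_surjective 𝔭.primeCompl y
    have hs := congrArg ψ (IsLocalization.mk'_spec A r s)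
    rw [map_mul, hy, zero_mul, hψR] at hs
    have hr0 : r = 0 := hKinj (by rw [map_zero, ← hs])
    rw [hr0]; exact IsLocalization.mk'_zero s
  have hlift : ∀ x : K, InLoc R K 𝔭 x → ∃ y : A, ψ y = x := by
    rintro x ⟨a', b', hb', hx⟩
    have hb'c : b' ∈ 𝔭.primeCompl := hb'
    refine ⟨IsLocalization.mk' A a' ⟨b', hb'c⟩, ?_⟩
    have hs := congrArg ψ (IsLocalization.mk'_spec A a' ⟨b', hb'c⟩)
    rw [map_mul, hψR, hψR] at hs
    have hb'0 : algebraMap R K b' ≠ 0 := fun h =>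
      hb' (by have : b' = 0 := hKinj (by rw [h, map_zero]); rw [this]; exact 𝔭.zero_mem)
    apply mul_right_cancel₀ hb'0
    rw [hs, ← hx]; ring
  choose N hN using fun i j => hlift (M i j) (hM i j)
  have hdetψ : ψ (Matrix.of N).det = M.det := by
    rw [RingHom.map_det]
    congr 1
    ext i j
    exact hN i j
  obtain ⟨a, b, haP, hbP, habK⟩ := hdet
  have hdetunit : IsUnit (Matrix.of N).det := by
    obtain ⟨⟨rr, ss⟩, (hrs : IsLocalization.mk' A rr ss = (Matrix.of N).det)⟩ := IsLocalization.mk'_surjective 𝔭.primeCompl (Matrix.of N).det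
    rw [← hrs, IsLocalization.AtPrime.isUnit_mk'_iff]
    have h1 := congrArg ψ (IsLocalization.mk'_spec A rr ss)
    rw [hrs, map_mul, hψR, hψR, hdetψ] at h1
    have h2 : algebraMap R K (rr * b) = algebraMap R K (a * ss) := by
      rw [map_mul, map_mul, ← h1, ← habK]; ring
    have h3 : rr * b = a * (ss : R) := hKinj h2
    intro hrr
    have hmem : a * (ss : R) ∈ 𝔭 := h3 ▸ Ideal.mul_mem_right _ _ hrr
    rcases ‹𝔭.IsPrime›.mem_or_mem hmem with h | h
    · exact haP h
    · exact ss.2 h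
  have hQ : ∀ x : K, InMaxLoc R K 𝔭 x → ∀ y : A, ψ y = x → y ∈ IsLocalRing.maximalIdeal A := by
    rintro x ⟨a', b', ha', hb', hx⟩ y hy
    have hby : algebraMap R A b' * y = algebraMap R A a' := by
      apply hψinj; rw [map_mul, hψR, hψR, hy, hx]
    have hb'c : b' ∈ 𝔭.primeCompl := hb'
    obtain ⟨u, hu⟩ := IsLocalization.map_units A (⟨b', hb'c⟩ : 𝔭.primeCompl)
    have hyy : y = ↑u⁻¹ * algebraMap R A a' := by
      rw [← hby, ← hu, Units.inv_mul_cancel_left]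
    rw [hyy]
    exact Ideal.mul_mem_left _ _ ((IsLocalization.AtPrime.to_map_mem_maximal_iff A 𝔭 a').2 ha')
  intro k
  set u : Fin n → A := fun i => algebraMap R A (c i) with hu
  set w : Fin n → A := fun j => ∑ i, u i * (Matrix.of N) i j with hw
  have hwQ : ∀ j, w j ∈ IsLocalRing.maximalIdeal A := by
    intro j
    refine hQ _ (hc j) (w j) ?_
    rw [hw]
    simp only
    rw [map_sum]
    refine Finset.sum_congr rfl fun i _ => ?_
    rw [map_mul, hψR]
    exact congrArg (algebraMap R K (c i) * ·) (hN i j)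
  have hkey : (Matrix.of N).det * u k = ∑ j, w j * (Matrix.of N).adjugate j k := by
    have h := congrFun (Matrix.vecMul_vecMul u (Matrix.of N) (Matrix.of N).adjugate) k
    rw [Matrix.mul_adjugate] at h
    have hL : Matrix.vecMul (Matrix.vecMul u (Matrix.of N)) (Matrix.of N).adjugate k
        = ∑ j, w j * (Matrix.of N).adjugate j k := by
      simp [Matrix.vecMul, dotProduct, hw]
    have hR : Matrix.vecMul u ((Matrix.of N).det • (1 : Matrix (Fin n) (Fin n) A)) k
        = (Matrix.of N).det * u k := by
      simp [Matrix.vecMul, dotProduct, Matrix.one_apply, mul_comm]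
    rw [← hL, h, hR]
  have hukQ : u k ∈ IsLocalRing.maximalIdeal A := by
    obtain ⟨du, hdu⟩ := hdetunit
    have hsum : (Matrix.of N).det * u k ∈ IsLocalRing.maximalIdeal A := by
      rw [hkey]
      exact Ideal.sum_mem _ fun j _ => Ideal.mul_mem_right _ _ (hwQ j)
    have huk : u k = ↑du⁻¹ * ((Matrix.of N).det * u k) := by
      rw [← hdu, Units.inv_mul_cancel_left]
    rw [huk]
    exact Ideal.mul_mem_left _ _ hsum
  exact (IsLocalization.AtPrime.to_map_mem_maximal_iff A 𝔭 (c k)).1 hukQ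

/-- Let `R` be a Dedekind domain with fraction field `K`, `f₁, …, fₙ`
multivariate power series over `K`, and `S` an infinite set of maximal ideals `𝔭` of `R` such
that all coefficients of every `fᵢ` lie in `R_𝔭`. If for every `𝔭 ∈ S` the reductions of the
`fᵢ` modulo `𝔭` are linearly dependent over `R/𝔭` (equivalently: there are `c₁, …, cₙ ∈ R`,
not all in `𝔭`, with every coefficient of `∑ cᵢ fᵢ` lying in `𝔭R_𝔭`), then `f₁, …, fₙ` are
linearly dependent over `K`. -/
theorem linear_dependence_of_reductions
    {R K : Type} [CommRing R] [IsDedekindDomain R] [Field K] [Algebra R K] [IsFractionRing R K]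
    {d n : ℕ} (S : Set (Ideal R)) (hSinf : S.Infinite) (hSmax : ∀ 𝔭 ∈ S, Ideal.IsMaximal 𝔭)
    (f : Fin n → MvPowerSeries (Fin d) K)
    (hcoeff : ∀ 𝔭 ∈ S, ∀ i, ∀ m, InLoc R K 𝔭 (MvPowerSeries.coeff m (f i)))
    (hdep : ∀ 𝔭 ∈ S, ∃ c : Fin n → R, (∃ i, c i ∉ 𝔭) ∧
      ∀ m, InMaxLoc R K 𝔭 (∑ i, algebraMap R K (c i) * MvPowerSeries.coeff m (f i))) :
    ∃ b : Fin n → K, b ≠ 0 ∧ ∑ i, b i • f i = 0 := by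
  classical
  by_contra hcon
  set g : Fin n → (Fin d →₀ ℕ) → K := fun i m => MvPowerSeries.coeff m (f i) with hg
  have H : ∀ c : Fin n → K, (∀ m, ∑ i, c i * g i m = 0) → c = 0 := by
    intro c hc
    by_contra h0
    refine hcon ⟨c, h0, ?_⟩
    apply MvPowerSeries.ext
    intro m
    rw [map_sum, map_zero, ← hc m]
    exact Finset.sum_congr rfl fun i _ => by
      rw [(MvPowerSeries.coeff m).map_smul, smul_eq_mul]
  obtain ⟨ms, hdet⟩ := exists_det_ne_zero g H
  set M : Matrix (Fin n) (Fin n) K := Matrix.of fun i j => g i (ms j) with hM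
  obtain ⟨⟨a, b⟩, hab⟩ := IsLocalization.surj (M := nonZeroDivisors R) M.det
  have hKinj : Function.Injective (algebraMap R K) := IsFractionRing.injective R K
  have hb0 : (b : R) ≠ 0 := nonZeroDivisors.coe_ne_zero b
  have habK : algebraMap R K (b : R) ≠ 0 := fun h =>
    hb0 (hKinj (by rw [h, map_zero]))
  have ha0 : a ≠ 0 := by
    intro h
    rw [h, map_zero] at hab
    exact hdet (by
      rcases mul_eq_zero.mp hab with h' | h'
      · exact h'
      · exact absurd h' habK)
  have hbad : {𝔭 | 𝔭 ∈ S ∧ (a ∈ 𝔭 ∨ (b : R) ∈ 𝔭)}.Finite := by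
    have hI0 : Ideal.span {a * (b : R)} ≠ 0 := by
      rw [Ne, Ideal.zero_eq_bot, Ideal.span_singleton_eq_bot]
      exact mul_ne_zero ha0 hb0
    have hfin := Ideal.finite_factors hI0
    refine (hfin.image (fun v => v.asIdeal)).subset ?_
    rintro 𝔭 ⟨hpS, hmem⟩
    have hmaxp := hSmax 𝔭 hpS
    have hprime : 𝔭.IsPrime := hmaxp.isPrime
    have habmem : a * (b : R) ∈ 𝔭 :=
      hmem.elim (fun h => Ideal.mul_mem_right _ _ h) (fun h => Ideal.mul_mem_left _ _ h)
    have hne : 𝔭 ≠ ⊥ := by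
      rintro rfl
      rcases hmem with h | h
      · exact ha0 ((Ideal.mem_bot).mp h)
      · exact hb0 ((Ideal.mem_bot).mp h)
    exact ⟨⟨𝔭, hprime, hne⟩,
      Ideal.dvd_iff_le.2 ((Ideal.span_singleton_le_iff_mem _).2 habmem), rfl⟩
  obtain ⟨𝔭, h𝔭⟩ := (hSinf.diff hbad).nonempty
  have h𝔭S : 𝔭 ∈ S := h𝔭.1
  have hanot : a ∉ 𝔭 ∧ (b : R) ∉ 𝔭 := by
    have := h𝔭.2
    simp only [Set.mem_setOf_eq, not_and, not_or] at this
    exact this h𝔭S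
  obtain ⟨c, ⟨i0, hi0⟩, hcc⟩ := hdep 𝔭 h𝔭S
  refine hi0 (mem_of_matrix_dependence 𝔭 (hSmax 𝔭 h𝔭S) M
    (fun i j => hcoeff 𝔭 h𝔭S i (ms j))
    ⟨a, b, hanot.1, hanot.2, hab⟩ c (fun j => hcc (ms j)) i0)
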